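/- arXiv:0905.0218 — 2 statements merged into one kernel-verified Lean document; each statement's English description precedes it below -/
import Mathlib

section
/- Let λ, μ, ν be partitions of m of lengths exactly p, q, r respectively with p = qr. If μ_q < r·λ_p or ν_r < q·λ_p, then lr(λ, μ; ν) = 0, i.e., there is no pair of Littlewood–Richardson multitableaux of shapes λ and μ with the same content and type ν. -/
/-- A partition: a weakly decreasing, finitely supported sequence of naturals.
`parts i` is the `(i+1)`-st part (0-indexed). -/
structure YPartition where
  parts : ℕ → ℕ
  antitone : ∀ ⦃i j : ℕ⦄, i ≤ j → parts j ≤ parts i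
  support_finite : Set.Finite {i | parts i ≠ 0}

/-- The size `|λ|` of a partition. -/
noncomputable def psize (l : YPartition) : ℕ :=
  l.support_finite.toFinset.sum l.parts

/-- The length `ℓ(λ)`: the number of positive parts. -/
noncomputable def plength (l : YPartition) : ℕ :=
  l.support_finite.toFinset.card

/-- The empty partition. -/
def pempty : YPartition :=
  ⟨fun _ => 0, fun _ _ _ => le_rfl, by simp⟩

/-- λ + (t^p): add `t` to each of the first `p` parts. -/
def padd (l : YPartition) (p t : ℕ) : YPartition where
  parts i := l.parts i + (if i < p then t else 0)
  antitone := by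
    intro i j h
    have h1 := l.antitone h
    try dsimp only
    split_ifs <;> omega
  support_finite := by
    apply Set.Finite.subset (l.support_finite.union (Set.finite_Iio p))
    intro i hi
    simp only [Set.mem_setOf_eq] at hi
    simp only [Set.mem_union, Set.mem_setOf_eq, Set.mem_Iio]
    by_contra hc
    push_neg at hc
    rw [if_neg (by omega : ¬ i < p)] at hi
    omega

/-- Membership of a cell `(i, j)` (0-indexed) in the Young diagram of `λ`. -/
def memD (l : YPartition) (c : ℕ × ℕ) : Prop := c.2 < l.parts c.1

/-- The conjugate partition. -/
noncomputable def pconj (l : YPartition) : YPartition where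
  parts j := Set.ncard {i | j < l.parts i}
  antitone := by
    intro j j' h
    apply Set.ncard_le_ncard
    · intro i hi
      exact lt_of_le_of_lt h hi
    · exact l.support_finite.subset (by intro i hi; simp only [Set.mem_setOf_eq] at *; omega)
  support_finite := by
    apply Set.Finite.subset (Set.finite_Iio (l.parts 0))
    intro j hj
    simp only [Set.mem_setOf_eq] at hj
    obtain ⟨i, hi⟩ := Set.nonempty_of_ncard_ne_zero hj
    exact Set.mem_Iio.mpr (lt_of_lt_of_le hi (l.antitone (Nat.zero_le i)))

/-- The intersection `λ ∩ μ` of two Young diagrams, as a partition. -/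
def pmin (l m : YPartition) : YPartition where
  parts i := min (l.parts i) (m.parts i)
  antitone := fun _ _ h => min_le_min (l.antitone h) (m.antitone h)
  support_finite := l.support_finite.subset (by intro i hi; simp only [Set.mem_setOf_eq] at *; omega)

/-- The value of the permutation character `φ^c` of `S_m` (induced from the trivial
character of the Young subgroup of type `c`) at `σ`: the number of `σ`-invariant
functions `Fin m → ℕ` with fibre sizes prescribed by `c`. -/
noncomputable def permChar (m : ℕ) (c : ℕ → ℕ) (σ : Equiv.Perm (Fin m)) : ℚ :=
  (Set.ncard {f : Fin m → ℕ | (∀ x, f (σ x) = f x) ∧ ∀ k, Set.ncard {x | f x = k} = c k} : ℚ)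

/-- The entries of the Jacobi–Trudi matrix attached to the skew shape `λ/δ`. -/
def jtEntry (l d : YPartition) (p : ℕ) (w : Equiv.Perm (Fin p)) (k : ℕ) : ℤ :=
  if hk : k < p then
    (l.parts k : ℤ) - (d.parts (w ⟨k, hk⟩) : ℤ) + ((w ⟨k, hk⟩ : ℕ) : ℤ) - (k : ℤ)
  else 0

open Classical in
/-- The skew character `χ^{λ/δ}` of `S_m`, defined via the Jacobi–Trudi determinant
expansion into permutation characters. Here `p` bounds the number of rows used. -/
noncomputable def skewChar (m p : ℕ) (l d : YPartition) (σ : Equiv.Perm (Fin m)) : ℚ :=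
  ∑ w : Equiv.Perm (Fin p),
    if ∀ k, 0 ≤ jtEntry l d p w k then
      ((Equiv.Perm.sign w : ℤ) : ℚ) * permChar m (fun k => (jtEntry l d p w k).toNat) σ
    else 0

/-- The irreducible character `χ^λ` of `S_m`. -/
noncomputable def irrChar (m : ℕ) (l : YPartition) (σ : Equiv.Perm (Fin m)) : ℚ :=
  skewChar m (plength l) l pempty σ

/-- The inner product of class functions on `S_m`. -/
noncomputable def cinner (m : ℕ) (f g : Equiv.Perm (Fin m) → ℚ) : ℚ :=
  (∑ σ : Equiv.Perm (Fin m), f σ * g σ) / (Nat.factorial m : ℚ)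

/-- The Kronecker coefficient `k(λ,μ,ν) = ⟨χ^λ ⊗ χ^μ, χ^ν⟩`. -/
noncomputable def kron (m : ℕ) (l mu nu : YPartition) : ℚ :=
  cinner m (fun σ => irrChar m l σ * irrChar m mu σ) (irrChar m nu)

/-- The cell `(i,j)` lies in the skew shape with outer row lengths `outer` and
inner row lengths `inner`. -/
def InSkew (outer inner : ℕ → ℕ) (c : ℕ × ℕ) : Prop :=
  inner c.1 ≤ c.2 ∧ c.2 < outer c.1

/-- `T` is a semistandard skew tableau of the given skew shape (entries `≥ 1` on the
shape, `0` off it; rows weakly increase, columns strictly increase). -/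
def IsSSYT (outer inner : ℕ → ℕ) (T : ℕ × ℕ → ℕ) : Prop :=
  (∀ c, ¬ InSkew outer inner c → T c = 0) ∧
  (∀ c, InSkew outer inner c → 1 ≤ T c) ∧
  (∀ i j j', InSkew outer inner (i, j) → InSkew outer inner (i, j') → j ≤ j' →
    T (i, j) ≤ T (i, j')) ∧
  (∀ i j, InSkew outer inner (i, j) → InSkew outer inner (i + 1, j) → T (i, j) < T (i + 1, j))

/-- `T` has content `ρ`: the number of entries equal to `k+1` is `ρ k`. -/
def HasContent (T : ℕ × ℕ → ℕ) (ρ : ℕ → ℕ) : Prop :=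
  ∀ k : ℕ, Set.ncard {c : ℕ × ℕ | T c = k + 1} = ρ k

/-- The ballot (lattice word) condition on the reverse reading word of `T`. -/
def Ballot (T : ℕ × ℕ → ℕ) : Prop :=
  ∀ i j k : ℕ,
    Set.ncard {c : ℕ × ℕ | (c.1 < i ∨ (c.1 = i ∧ j ≤ c.2)) ∧ T c = k + 2} ≤
    Set.ncard {c : ℕ × ℕ | (c.1 < i ∨ (c.1 = i ∧ j ≤ c.2)) ∧ T c = k + 1}

/-- `T` is a Littlewood–Richardson tableau of the given skew shape and content `ρ`. -/
def IsLR (outer inner : ℕ → ℕ) (T : ℕ × ℕ → ℕ) (ρ : ℕ → ℕ) : Prop :=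
  IsSSYT outer inner T ∧ HasContent T ρ ∧ Ballot T

/-- `(L, T)` is a Littlewood–Richardson multitableau of shape `l`, contents
`ρ 0, …, ρ (r-1)` and type `π`: `L` is a chain `∅ = L 0 ⊆ L 1 ⊆ ⋯ ⊆ L r = l`
with `|L (i+1)/L i| = π i`, and `T i` is an LR tableau of shape `L (i+1)/L i`
and content `ρ i`.  (Data beyond index `r` is pinned down so that such pairs
can be counted.) -/
def IsLRMulti (l : YPartition) (r : ℕ) (π : ℕ → ℕ) (ρ : ℕ → ℕ → ℕ)
    (L : ℕ → YPartition) (T : ℕ → ℕ × ℕ → ℕ) : Prop :=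
  L 0 = pempty ∧ (∀ i, r ≤ i → L i = l) ∧ (∀ i, r ≤ i → T i = fun _ => 0) ∧
  (∀ i < r, ∀ n, (L i).parts n ≤ (L (i + 1)).parts n) ∧
  (∀ i < r, psize (L (i + 1)) = psize (L i) + π i) ∧
  (∀ i < r, IsLR (L (i + 1)).parts (L i).parts (T i) (ρ i))

/-- `lr(λ, μ; π)`: the number of pairs of Littlewood–Richardson multitableaux of
shapes `λ` and `μ`, the same (partition) contents, and type `π = (π 0, …, π (r-1))`. -/
noncomputable def lrcount (l mu : YPartition) (r : ℕ) (π : ℕ → ℕ) : ℕ :=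
  Set.ncard {x : (ℕ → ℕ → ℕ) × ((ℕ → YPartition) × (ℕ → ℕ × ℕ → ℕ)) ×
      ((ℕ → YPartition) × (ℕ → ℕ × ℕ → ℕ)) |
    (∀ i, r ≤ i → x.1 i = fun _ => 0) ∧
    (∀ i < r, ∀ ⦃a b : ℕ⦄, a ≤ b → x.1 i b ≤ x.1 i a) ∧
    IsLRMulti l r π x.1 x.2.1.1 x.2.1.2 ∧
    IsLRMulti mu r π x.1 x.2.2.1 x.2.2.2}

/-- The Kostka number `K_{κπ}`: the number of semistandard tableaux of shape `κ`
and content `π`. -/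
noncomputable def kostka (k : YPartition) (π : ℕ → ℕ) : ℕ :=
  Set.ncard {T : ℕ × ℕ → ℕ | IsSSYT k.parts (fun _ => 0) T ∧ HasContent T π}

section Helpers

lemma parts_ne_zero_iff (l : YPartition) (i : ℕ) : l.parts i ≠ 0 ↔ i < plength l := by
  classical
  constructor
  · intro h
    have hsub : Finset.Iic i ⊆ l.support_finite.toFinset := by
      intro j hj
      simp only [Finset.mem_Iic] at hj
      simp only [Set.Finite.mem_toFinset, Set.mem_setOf_eq]
      have := l.antitone hj
      omega
    have hc := Finset.card_le_card hsub
    rw [Nat.card_Iic] at hc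
    unfold plength
    omega
  · intro h
    by_contra hc
    have hc' : l.parts i = 0 := by omega
    have hsub : l.support_finite.toFinset ⊆ Finset.Iio i := by
      intro j hj
      simp only [Set.Finite.mem_toFinset, Set.mem_setOf_eq] at hj
      simp only [Finset.mem_Iio]
      by_contra hji
      push_neg at hji
      have := l.antitone hji
      omega
    have hcard := Finset.card_le_card hsub
    rw [Nat.card_Iio] at hcard
    unfold plength at h
    omega

lemma memD_finite (l : YPartition) : {c : ℕ × ℕ | memD l c}.Finite := by
  apply Set.Finite.subset ((Set.finite_Iio (plength l)).prod (Set.finite_Iio (l.parts 0)))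
  intro c hc
  simp only [Set.mem_setOf_eq, memD] at hc
  have h0 := l.antitone (Nat.zero_le c.1)
  constructor
  · exact (parts_ne_zero_iff l c.1).mp (by omega)
  · simp only [Set.mem_Iio]; omega

lemma psize_eq_ncard (l : YPartition) : psize l = Set.ncard {c : ℕ × ℕ | memD l c} := by
  classical
  have hD : {c : ℕ × ℕ | memD l c} = ↑(l.support_finite.toFinset.biUnion
      (fun i => ({i} : Finset ℕ) ×ˢ Finset.range (l.parts i))) := by
    ext c
    simp only [Set.mem_setOf_eq, memD, Finset.coe_biUnion, Set.mem_iUnion, Finset.mem_coe,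
      Finset.mem_biUnion, Finset.mem_product, Finset.mem_singleton, Finset.mem_range,
      Set.Finite.mem_toFinset, Set.mem_setOf_eq]
    constructor
    · intro h
      exact ⟨c.1, by omega, rfl, h⟩
    · rintro ⟨i, _, rfl, h⟩
      exact h
  rw [hD, Set.ncard_coe_finset, Finset.card_biUnion]
  · unfold psize
    apply Finset.sum_congr rfl
    intro i _
    simp [Finset.card_product]
  · intro i _ j _ hij
    simp only [Finset.disjoint_left]
    rintro ⟨a, b⟩ ha hb
    simp only [Finset.mem_product, Finset.mem_singleton] at ha hb
    exact hij (ha.1 ▸ hb.1 ▸ rfl)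

lemma skew_subset_memD (l d : YPartition) (c : ℕ × ℕ) (h : InSkew l.parts d.parts c) :
    memD l c := h.2

lemma skew_finite (l d : YPartition) : {c : ℕ × ℕ | InSkew l.parts d.parts c}.Finite :=
  (memD_finite l).subset (fun c hc => hc.2)

lemma psize_add_skew (d l : YPartition) (h : ∀ i, d.parts i ≤ l.parts i) :
    psize l = psize d + Set.ncard {c : ℕ × ℕ | InSkew l.parts d.parts c} := by
  have hunion : {c : ℕ × ℕ | memD l c} =
      {c : ℕ × ℕ | memD d c} ∪ {c : ℕ × ℕ | InSkew l.parts d.parts c} := by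
    ext c
    simp only [Set.mem_setOf_eq, Set.mem_union, memD, InSkew]
    have := h c.1
    omega
  have hdisj : Disjoint {c : ℕ × ℕ | memD d c} {c : ℕ × ℕ | InSkew l.parts d.parts c} := by
    rw [Set.disjoint_left]
    intro c hc hc'
    simp only [Set.mem_setOf_eq, memD, InSkew] at hc hc'
    omega
  rw [psize_eq_ncard l, psize_eq_ncard d, hunion,
    Set.ncard_union_eq hdisj (memD_finite d) (skew_finite l d)]

end Helpers

section Helpers2

/-- In an LR tableau of skew shape inside the diagram of `l`, an entry `v+1` lies in row `≥ v`. -/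
lemma lr_row_bound (l d : YPartition) (T : ℕ × ℕ → ℕ) (ρ : ℕ → ℕ)
    (hlr : IsLR l.parts d.parts T ρ) :
    ∀ v i j, T (i, j) = v + 1 → v ≤ i := by
  obtain ⟨hssyt, _, hballot⟩ := hlr
  intro v
  induction v with
  | zero => intro i j _; exact Nat.zero_le i
  | succ v ih =>
    intro i j hT
    -- the cell (i,j) is in the skew shape
    have hskew : InSkew l.parts d.parts (i, j) := by
      by_contra hc
      rw [hssyt.1 _ hc] at hT
      omega
    have hb := hballot i j v
    have hfin : {c : ℕ × ℕ | (c.1 < i ∨ (c.1 = i ∧ j ≤ c.2)) ∧ T c = v + 2}.Finite := by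
      apply (memD_finite l).subset
      intro c hc
      simp only [Set.mem_setOf_eq] at hc
      have : InSkew l.parts d.parts c := by
        by_contra h'
        rw [hssyt.1 _ h'] at hc
        omega
      exact this.2
    have hmem : (i, j) ∈ {c : ℕ × ℕ | (c.1 < i ∨ (c.1 = i ∧ j ≤ c.2)) ∧ T c = v + 2} :=
      ⟨Or.inr ⟨rfl, le_refl j⟩, hT⟩
    have h1 : 1 ≤ {c : ℕ × ℕ | (c.1 < i ∨ (c.1 = i ∧ j ≤ c.2)) ∧ T c = v + 2}.ncard := by
      rw [Nat.one_le_iff_ne_zero]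
      intro h0
      rw [Set.ncard_eq_zero hfin] at h0
      rw [h0] at hmem
      exact hmem
    have h2 : 1 ≤ {c : ℕ × ℕ | (c.1 < i ∨ (c.1 = i ∧ j ≤ c.2)) ∧ T c = v + 1}.ncard := le_trans h1 hb
    have h2' : {c : ℕ × ℕ | (c.1 < i ∨ (c.1 = i ∧ j ≤ c.2)) ∧ T c = v + 1}.ncard ≠ 0 := by omega
    obtain ⟨c, hc⟩ := Set.nonempty_of_ncard_ne_zero h2'
    simp only [Set.mem_setOf_eq] at hc
    have hcskew : InSkew l.parts d.parts c := by
      by_contra h'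
      rw [hssyt.1 _ h'] at hc
      omega
    rcases hc.1 with hlt | ⟨heq, hle⟩
    · have := ih c.1 c.2 (by rw [← hc.2])
      omega
    · exfalso
      have hrow := hssyt.2.2.1 i j c.2 hskew (by rw [← heq]; exact hcskew) hle
      have : T (i, c.2) = v + 1 := by rw [← hc.2, ← heq]
      omega

/-- Strict increase down a column of a skew SSYT between partitions. -/
lemma ssyt_col_strict (l d : YPartition) (T : ℕ × ℕ → ℕ)
    (hssyt : IsSSYT l.parts d.parts T) (j : ℕ) :
    ∀ i i', i < i' → InSkew l.parts d.parts (i, j) → InSkew l.parts d.parts (i', j) →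
      T (i, j) < T (i', j) := by
  intro i i' hlt hi hi'
  induction i' with
  | zero => omega
  | succ n ihn =>
    rcases Nat.lt_succ_iff_lt_or_eq.mp hlt with h | h
    · have hn : InSkew l.parts d.parts (n, j) := by
        constructor
        · exact le_trans (d.antitone (by omega : i ≤ n)) hi.1
        · exact lt_of_lt_of_le hi'.2 (l.antitone (Nat.le_succ n))
      exact lt_trans (ihn h hn) (hssyt.2.2.2 n j hn hi')
    · subst h
      exact hssyt.2.2.2 i j hi hi'

end Helpers2

section Helpers3

lemma chain_mono (l : YPartition) (r : ℕ) (L : ℕ → YPartition)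
    (hr : ∀ i, r ≤ i → L i = l)
    (hmono : ∀ i < r, ∀ n, (L i).parts n ≤ (L (i + 1)).parts n) :
    ∀ k k', k ≤ k' → ∀ n, (L k).parts n ≤ (L k').parts n := by
  intro k k' hkk
  induction k' with
  | zero =>
    have : k = 0 := by omega
    subst this; intro n; exact le_refl _
  | succ k' ih =>
    intro n
    rcases Nat.lt_succ_iff_lt_or_eq.mp (Nat.lt_succ_of_le hkk) with h | h
    · have h1 : (L k).parts n ≤ (L k').parts n := ih (by omega) n
      rcases Nat.lt_or_ge k' r with h2 | h2
      · exact le_trans h1 (hmono k' h2 n)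
      · rw [hr k' h2, hr (k' + 1) (by omega)] at *
        exact h1
    · subst h; exact le_refl _

end Helpers3

/-- **Lemma.** If `λ, μ, ν ⊢ m` have lengths exactly `p, q, r` with `p = qr`, and
`μ_q < r·λ_p` or `ν_r < q·λ_p`, then `lr(λ, μ; ν) = 0`. -/
theorem lrcount_eq_zero (m p q r : ℕ) (lam mu nu : YPartition)
    (hlam : psize lam = m) (hmu : psize mu = m) (hnu : psize nu = m)
    (hlp : plength lam = p) (hlq : plength mu = q) (hlr : plength nu = r)
    (hpqr : p = q * r)
    (hcond : mu.parts (q - 1) < r * lam.parts (p - 1) ∨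
      nu.parts (r - 1) < q * lam.parts (p - 1)) :
    lrcount lam mu r nu.parts = 0 := by
  classical
  rw [lrcount]
  rw [show {x : (ℕ → ℕ → ℕ) × ((ℕ → YPartition) × (ℕ → ℕ × ℕ → ℕ)) ×
      ((ℕ → YPartition) × (ℕ → ℕ × ℕ → ℕ)) |
    (∀ i, r ≤ i → x.1 i = fun _ => 0) ∧
    (∀ i < r, ∀ ⦃a b : ℕ⦄, a ≤ b → x.1 i b ≤ x.1 i a) ∧
    IsLRMulti lam r nu.parts x.1 x.2.1.1 x.2.1.2 ∧
    IsLRMulti mu r nu.parts x.1 x.2.2.1 x.2.2.2} = (∅ : Set _) from ?_, Set.ncard_empty]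
  rw [Set.eq_empty_iff_forall_notMem]
  rintro ⟨ρ, ⟨L, S⟩, ⟨M, T⟩⟩ hx
  simp only [Set.mem_setOf_eq] at hx
  obtain ⟨hρ0, hρanti, hLmulti, hMmulti⟩ := hx
  obtain ⟨hL0, hLr, hS0, hLmono, hLsize, hLlr⟩ := hLmulti
  obtain ⟨hM0, hMr, hT0, hMmono, hMsize, hMlr⟩ := hMmulti
  set a := lam.parts (p - 1) with ha_def
  -- basic positivity
  have ha : 1 ≤ a := by
    by_contra h0
    push_neg at h0
    have ha0 : a = 0 := by omega
    rcases hcond with h | h <;> rw [ha0, Nat.mul_zero] at h <;> omega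
  have hp1 : 1 ≤ p := by
    have h := (parts_ne_zero_iff lam (p - 1)).mp (by omega)
    rw [hlp] at h
    omega
  have hq1 : 1 ≤ q := by
    rcases Nat.eq_zero_or_pos q with h | h
    · rw [h, Nat.zero_mul] at hpqr; omega
    · exact h
  have hr1 : 1 ≤ r := by
    rcases Nat.eq_zero_or_pos r with h | h
    · rw [h, Nat.mul_zero] at hpqr; omega
    · exact h
  -- chains
  have hLchain : ∀ k k', k ≤ k' → ∀ n, (L k).parts n ≤ (L k').parts n :=
    chain_mono lam r L hLr hLmono
  have hMchain : ∀ k k', k ≤ k' → ∀ n, (M k).parts n ≤ (M k').parts n :=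
    chain_mono mu r M hMr hMmono
  have hLtop : ∀ k, ∀ n, (L k).parts n ≤ lam.parts n := by
    intro k n
    rcases Nat.lt_or_ge k r with h | h
    · exact le_trans (hLchain k r (by omega) n) (le_of_eq (by rw [hLr r (le_refl r)]))
    · rw [hLr k h]
  have hMtop : ∀ k, ∀ n, (M k).parts n ≤ mu.parts n := by
    intro k n
    rcases Nat.lt_or_ge k r with h | h
    · exact le_trans (hMchain k r (by omega) n) (le_of_eq (by rw [hMr r (le_refl r)]))
    · rw [hMr k h]
  -- mu length facts
  have hmuzero : ∀ i, q ≤ i → mu.parts i = 0 := by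
    intro i hi
    by_contra h
    have := (parts_ne_zero_iff mu i).mp h
    omega
  -- entry v+1 in T k sits in row between v and q-1
  have hrowT : ∀ k < r, ∀ v i j, T k (i, j) = v + 1 → v ≤ i ∧ i < q := by
    intro k hk v i j hT
    constructor
    · exact lr_row_bound (M (k + 1)) (M k) (T k) (ρ k) (hMlr k hk) v i j hT
    · have hskew : InSkew (M (k + 1)).parts (M k).parts (i, j) := by
        by_contra hc
        rw [(hMlr k hk).1.1 _ hc] at hT
        omega
      have h1 : j < (M (k + 1)).parts i := hskew.2
      have h2 := hMtop (k + 1) i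
      by_contra hc
      push_neg at hc
      rw [hmuzero i hc] at h2
      omega
  -- contents have length at most q
  have hρlen : ∀ k < r, ∀ v, q ≤ v → ρ k v = 0 := by
    intro k hk v hv
    have hcont := (hMlr k hk).2.1 v
    have hempty : {c : ℕ × ℕ | T k c = v + 1} = (∅ : Set (ℕ × ℕ)) := by
      rw [Set.eq_empty_iff_forall_notMem]
      intro c hc
      simp only [Set.mem_setOf_eq] at hc
      have := hrowT k hk v c.1 c.2 (by rw [← hc])
      omega
    rw [hempty, Set.ncard_empty] at hcont
    omega
  -- lambda-side value sets are finite
  have hVfin : ∀ k < r, ∀ v, {c : ℕ × ℕ | S k c = v + 1}.Finite := by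
    intro k hk v
    apply (memD_finite lam).subset
    intro c hc
    simp only [Set.mem_setOf_eq] at hc
    have hskew : InSkew (L (k + 1)).parts (L k).parts c := by
      by_contra h'
      rw [(hLlr k hk).1.1 _ h'] at hc
      omega
    exact lt_of_lt_of_le hskew.2 (hLtop (k + 1) c.1)
  -- the columns
  set C : ℕ → ℕ → Finset ℕ := fun k j =>
    (Finset.range p).filter (fun i => (L k).parts i ≤ j ∧ j < (L (k + 1)).parts i) with hC_def
  have hCskew : ∀ k j i, i ∈ C k j → InSkew (L (k + 1)).parts (L k).parts (i, j) := by
    intro k j i hi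
    rw [hC_def] at hi
    simp only [Finset.mem_filter, Finset.mem_range] at hi
    exact ⟨hi.2.1, hi.2.2⟩
  -- entries in a column are between 1 and q
  have hentry : ∀ k < r, ∀ j i, i ∈ C k j → 1 ≤ S k (i, j) ∧ S k (i, j) ≤ q := by
    intro k hk j i hi
    have hskew := hCskew k j i hi
    have h1 : 1 ≤ S k (i, j) := (hLlr k hk).1.2.1 _ hskew
    refine ⟨h1, ?_⟩
    set v := S k (i, j) - 1 with hv_def
    have hSv : S k (i, j) = v + 1 := by omega
    have hmem : (i, j) ∈ {c : ℕ × ℕ | S k c = v + 1} := hSv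
    have hne : {c : ℕ × ℕ | S k c = v + 1}.ncard ≠ 0 := by
      intro h0
      rw [Set.ncard_eq_zero (hVfin k hk v)] at h0
      rw [h0] at hmem
      exact hmem
    have hcont := (hLlr k hk).2.1 v
    have hvq : v < q := by
      by_contra hvc
      push_neg at hvc
      rw [hcont, hρlen k hk v hvc] at hne
      exact hne rfl
    omega
  -- entries are injective on a column
  have hinj : ∀ k < r, ∀ j, Set.InjOn (fun i => S k (i, j) - 1) ↑(C k j) := by
    intro k hk j i hi i' hi' hf
    simp only [Finset.mem_coe] at hi hi'
    by_contra hne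
    rcases Nat.lt_or_ge i i' with h | h
    · have := ssyt_col_strict (L (k + 1)) (L k) (S k) (hLlr k hk).1 j i i' h
        (hCskew k j i hi) (hCskew k j i' hi')
      have h1 := (hentry k hk j i hi).1
      simp only at hf
      omega
    · have h' : i' < i := by omega
      have := ssyt_col_strict (L (k + 1)) (L k) (S k) (hLlr k hk).1 j i' i h'
        (hCskew k j i' hi') (hCskew k j i hi)
      have h1 := (hentry k hk j i' hi').1
      simp only at hf
      omega
  -- columns have at most q cells
  have hCub : ∀ k < r, ∀ j, (C k j).card ≤ q := by
    intro k hk j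
    have hle : (C k j).card ≤ (Finset.range q).card := by
      apply Finset.card_le_card_of_injOn (fun i => S k (i, j) - 1) ?_ (hinj k hk j)
      intro i hi
      simp only [Finset.coe_range, Set.mem_Iio, Finset.mem_coe, Finset.mem_range]
      have := hentry k hk j i hi
      omega
    simpa using hle
  -- covering of the full column
  have hcover : ∀ j < a, ∀ i < p, ∃ k < r, i ∈ C k j := by
    intro j hj i hi
    have hlam_i : j < lam.parts i :=
      lt_of_lt_of_le hj (lam.antitone (by omega : i ≤ p - 1))
    have hexP : ∃ k, j < (L (k + 1)).parts i := by
      refine ⟨r - 1, ?_⟩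
      rw [show r - 1 + 1 = r by omega, hLr r (le_refl r)]
      exact hlam_i
    set k₀ := Nat.find hexP with hk₀_def
    have hspec : j < (L (k₀ + 1)).parts i := Nat.find_spec hexP
    have hk₀r : k₀ < r := by
      have : k₀ ≤ r - 1 := Nat.find_min' hexP (by
        rw [show r - 1 + 1 = r by omega, hLr r (le_refl r)]
        exact hlam_i)
      omega
    refine ⟨k₀, hk₀r, ?_⟩
    rw [hC_def]
    simp only [Finset.mem_filter, Finset.mem_range]
    refine ⟨hi, ?_, hspec⟩
    rcases Nat.eq_zero_or_pos k₀ with h0 | h0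
    · rw [h0, hL0]
      exact Nat.zero_le j
    · have hmin := Nat.find_min hexP (m := k₀ - 1) (by omega)
      rw [show k₀ - 1 + 1 = k₀ by omega] at hmin
      omega
  -- each column piece has exactly q cells
  have hCcard : ∀ k < r, ∀ j < a, (C k j).card = q := by
    intro k hk j hj
    have hsub : Finset.range p ⊆ (Finset.range r).biUnion (fun k' => C k' j) := by
      intro i hi
      simp only [Finset.mem_range] at hi
      obtain ⟨k', hk', hmem⟩ := hcover j hj i hi
      exact Finset.mem_biUnion.mpr ⟨k', Finset.mem_range.mpr hk', hmem⟩
    have h1 : p ≤ ∑ k' ∈ Finset.range r, (C k' j).card := by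
      calc p = (Finset.range p).card := (Finset.card_range p).symm
        _ ≤ ((Finset.range r).biUnion (fun k' => C k' j)).card := Finset.card_le_card hsub
        _ ≤ ∑ k' ∈ Finset.range r, (C k' j).card := Finset.card_biUnion_le
    by_contra hne
    have hlt : (C k j).card < q := lt_of_le_of_ne (hCub k hk j) hne
    have h2 : ∑ k' ∈ Finset.range r, (C k' j).card < ∑ _k' ∈ Finset.range r, q :=
      Finset.sum_lt_sum (fun k' hk' => hCub k' (Finset.mem_range.mp hk') j)
        ⟨k, Finset.mem_range.mpr hk, hlt⟩
    rw [Finset.sum_const, Finset.card_range, smul_eq_mul] at h2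
    have hcomm : q * r = r * q := Nat.mul_comm q r
    linarith
  -- value surjectivity in columns
  have hsurj : ∀ k < r, ∀ j < a, ∀ v < q, ∃ i, i ∈ C k j ∧ S k (i, j) = v + 1 := by
    intro k hk j hj v hv
    have himg : (C k j).image (fun i => S k (i, j) - 1) = Finset.range q := by
      apply Finset.eq_of_subset_of_card_le
      · intro w hw
        simp only [Finset.mem_image] at hw
        obtain ⟨i, hi, rfl⟩ := hw
        simp only [Finset.mem_range]
        have := hentry k hk j i hi
        omega
      · rw [Finset.card_range, Finset.card_image_of_injOn (hinj k hk j), hCcard k hk j hj]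
    have hv' : v ∈ (C k j).image (fun i => S k (i, j) - 1) := by
      rw [himg]; exact Finset.mem_range.mpr hv
    simp only [Finset.mem_image] at hv'
    obtain ⟨i, hi, hf⟩ := hv'
    have := (hentry k hk j i hi).1
    exact ⟨i, hi, by omega⟩
  -- content lower bound
  have hρbound : ∀ k < r, ∀ v < q, a ≤ ρ k v := by
    intro k hk v hv
    have hcont := (hLlr k hk).2.1 v
    rw [← hcont]
    set g : ℕ → ℕ × ℕ := fun j =>
      if h : j < a then ((hsurj k hk j h v hv).choose, j) else (0, j) with hg
    have hmaps : ∀ j ∈ (↑(Finset.range a) : Set ℕ), g j ∈ {c : ℕ × ℕ | S k c = v + 1} := by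
      intro j hj
      simp only [Finset.mem_coe, Finset.mem_range] at hj
      simp only [hg, dif_pos hj]
      exact ((hsurj k hk j hj v hv).choose_spec).2
    have hginj : Set.InjOn g ↑(Finset.range a) := by
      intro j hj j' hj' hgj
      simp only [Finset.mem_coe, Finset.mem_range] at hj hj'
      simp only [hg, dif_pos hj, dif_pos hj'] at hgj
      exact congrArg Prod.snd hgj
    have hle := Set.ncard_le_ncard_of_injOn g hmaps hginj (hVfin k hk v)
    rwa [Set.ncard_coe_finset, Finset.card_range] at hle
  rcases hcond with hcase | hcase
  · -- case μ_q < r·λ_p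
    set B : ℕ → Finset ℕ := fun k =>
      (Finset.range (mu.parts (q - 1))).filter (fun j => T k (q - 1, j) = q) with hB_def
    have hBskew : ∀ k < r, ∀ j ∈ B k, InSkew (M (k + 1)).parts (M k).parts (q - 1, j) := by
      intro k hk j hj
      rw [hB_def] at hj
      simp only [Finset.mem_filter, Finset.mem_range] at hj
      by_contra h'
      rw [(hMlr k hk).1.1 _ h'] at hj
      omega
    have hBcard : ∀ k < r, (B k).card = ρ k (q - 1) := by
      intro k hk
      have hcont := (hMlr k hk).2.1 (q - 1)
      rw [show q - 1 + 1 = q by omega] at hcont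
      have hsetEq : {c : ℕ × ℕ | T k c = q} = (fun j => ((q - 1 : ℕ), j)) '' ↑(B k) := by
        ext c
        obtain ⟨c1, c2⟩ := c
        simp only [Set.mem_setOf_eq, Set.mem_image, Finset.mem_coe, hB_def,
          Finset.mem_filter, Finset.mem_range, Prod.mk.injEq]
        constructor
        · intro hc
          have hrow := hrowT k hk (q - 1) c1 c2 (by rw [hc]; omega)
          have hc1 : c1 = q - 1 := by omega
          subst hc1
          have hskew : InSkew (M (k + 1)).parts (M k).parts (q - 1, c2) := by
            by_contra h'
            rw [(hMlr k hk).1.1 _ h'] at hc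
            omega
          refine ⟨c2, ⟨?_, hc⟩, rfl, rfl⟩
          exact lt_of_lt_of_le hskew.2 (hMtop (k + 1) (q - 1))
        · rintro ⟨j, ⟨_, hj⟩, rfl, rfl⟩
          exact hj
      rw [hsetEq] at hcont
      rw [Set.ncard_image_of_injOn (fun j _ j' _ h => congrArg Prod.snd h),
        Set.ncard_coe_finset] at hcont
      omega
    have hBdisj : ∀ k ∈ Finset.range r, ∀ k' ∈ Finset.range r, k ≠ k' →
        Disjoint (B k) (B k') := by
      have key : ∀ k k', k < k' → k' < r → ∀ j, j ∈ B k → j ∈ B k' → False := by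
        intro k k' hkk hk' j hj hj'
        have h1 := hBskew k (by omega) j hj
        have h2 := hBskew k' hk' j hj'
        have hch := hMchain (k + 1) k' (by omega) (q - 1)
        have h12 : j < (M (k + 1)).parts (q - 1) := h1.2
        have h21 : (M k').parts (q - 1) ≤ j := h2.1
        omega
      intro k hk k' hk' hne
      rw [Finset.disjoint_left]
      intro j hj hj'
      rcases Nat.lt_or_ge k k' with h | h
      · exact key k k' h (Finset.mem_range.mp hk') j hj hj'
      · exact key k' k (by omega) (Finset.mem_range.mp hk) j hj' hj
    have hbig : ((Finset.range r).biUnion B).card = ∑ k ∈ Finset.range r, (B k).card :=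
      Finset.card_biUnion hBdisj
    have hsub : (Finset.range r).biUnion B ⊆ Finset.range (mu.parts (q - 1)) := by
      intro j hj
      rw [Finset.mem_biUnion] at hj
      obtain ⟨k, _, hjk⟩ := hj
      rw [hB_def] at hjk
      exact Finset.mem_range.mpr (Finset.mem_range.mp (Finset.mem_filter.mp hjk).1)
    have hsum : r * a ≤ ∑ k ∈ Finset.range r, (B k).card := by
      calc r * a = ∑ _k ∈ Finset.range r, a := by
            rw [Finset.sum_const, Finset.card_range, smul_eq_mul]
        _ ≤ ∑ k ∈ Finset.range r, (B k).card := by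
            apply Finset.sum_le_sum
            intro k hk
            rw [hBcard k (Finset.mem_range.mp hk)]
            exact hρbound k (Finset.mem_range.mp hk) (q - 1) (by omega)
    have hfinal := Finset.card_le_card hsub
    rw [hbig, Finset.card_range] at hfinal
    linarith
  · -- case ν_r < q·λ_p
    have hkr : r - 1 < r := by omega
    have hLrlam : L (r - 1 + 1) = lam := by
      rw [show r - 1 + 1 = r by omega]
      exact hLr r (le_refl r)
    have hsize := hLsize (r - 1) hkr
    rw [hLrlam] at hsize
    have hskewsize := psize_add_skew (L (r - 1)) lam (hLtop (r - 1))
    have hν : nu.parts (r - 1) =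
        Set.ncard {c : ℕ × ℕ | InSkew lam.parts (L (r - 1)).parts c} := by omega
    set F : Finset (ℕ × ℕ) := (Finset.range a).biUnion
      (fun j => (C (r - 1) j).image (fun i => (i, j))) with hF_def
    have hFcard : F.card = a * q := by
      rw [hF_def, Finset.card_biUnion]
      · calc ∑ j ∈ Finset.range a, ((C (r - 1) j).image (fun i => (i, j))).card
            = ∑ j ∈ Finset.range a, q := by
              apply Finset.sum_congr rfl
              intro j hj
              rw [Finset.card_image_of_injective _
                (fun i i' h => by simpa using congrArg Prod.fst h)]
              exact hCcard (r - 1) hkr j (Finset.mem_range.mp hj)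
          _ = a * q := by rw [Finset.sum_const, Finset.card_range, smul_eq_mul]
      · intro j _ j' _ hjj
        rw [Function.onFun, Finset.disjoint_left]
        rintro ⟨i1, j1⟩ h1 h2
        simp only [Finset.mem_image] at h1 h2
        obtain ⟨_, _, he1⟩ := h1
        obtain ⟨_, _, he2⟩ := h2
        have := congrArg Prod.snd he1
        have := congrArg Prod.snd he2
        simp only at *
        omega
    have hFsub : ↑F ⊆ {c : ℕ × ℕ | InSkew lam.parts (L (r - 1)).parts c} := by
      intro c hc
      simp only [Finset.mem_coe, hF_def, Finset.mem_biUnion, Finset.mem_image,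
        Finset.mem_range] at hc
      obtain ⟨j, _, i, hi, rfl⟩ := hc
      have := hCskew (r - 1) j i hi
      rw [hLrlam] at this
      exact this
    have hle := Set.ncard_le_ncard hFsub (skew_finite lam (L (r - 1)))
    rw [Set.ncard_coe_finset, hFcard] at hle
    have hcomm : q * a = a * q := Nat.mul_comm q a
    linarith
end

section
/- Let λ, μ, ν be partitions of m of lengths exactly p, q, r with p = qr, and suppose there exists a pair (S, T) of Littlewood–Richardson multitableaux of shapes λ and μ, same contents (ρ(1),…,ρ(r)), and type ν. Then each ρ(i) has length exactly q and ρ(i)_j ≥ λ_p for all j ∈ {1,…,q}; moreover μ_q ≥ r·λ_p and ν_r ≥ q·λ_p. -/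
section Aux

lemma lt_plength_iff (l : YPartition) (n : ℕ) : n < plength l ↔ l.parts n ≠ 0 := by
  constructor
  · intro h hn
    have hsub : l.support_finite.toFinset ⊆ Finset.range n := by
      intro i hi
      simp only [Set.Finite.mem_toFinset, Set.mem_setOf_eq] at hi
      rw [Finset.mem_range]
      by_contra hc
      have := l.antitone (Nat.le_of_not_lt hc)
      omega
    have := Finset.card_le_card hsub
    simp only [Finset.card_range] at this
    unfold plength at h
    omega
  · intro hn
    have hsub : Finset.range (n + 1) ⊆ l.support_finite.toFinset := by
      intro i hi
      simp only [Set.Finite.mem_toFinset, Set.mem_setOf_eq]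
      rw [Finset.mem_range] at hi
      have := l.antitone (Nat.lt_succ_iff.mp hi)
      omega
    have := Finset.card_le_card hsub
    simp only [Finset.card_range] at this
    unfold plength
    omega

lemma parts_eq_zero_of_plength_le (l : YPartition) {n : ℕ} (h : plength l ≤ n) :
    l.parts n = 0 := by
  by_contra hc
  have := (lt_plength_iff l n).mpr hc
  omega

lemma psize_eq_sum (l : YPartition) {N : ℕ} (h : plength l ≤ N) :
    psize l = ∑ i ∈ Finset.range N, l.parts i := by
  unfold psize
  apply Finset.sum_subset
  · intro i hi
    simp only [Set.Finite.mem_toFinset, Set.mem_setOf_eq] at hi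
    rw [Finset.mem_range]
    have := (lt_plength_iff l i).mpr hi
    omega
  · intro i _ hi
    simp only [Set.Finite.mem_toFinset, Set.mem_setOf_eq, not_not] at hi
    exact hi

lemma plength_mono {l m : YPartition} (h : ∀ n, l.parts n ≤ m.parts n) :
    plength l ≤ plength m := by
  unfold plength
  apply Finset.card_le_card
  intro i hi
  simp only [Set.Finite.mem_toFinset, Set.mem_setOf_eq] at *
  have := h i
  omega

lemma skew_finite_s15 (Lo : YPartition) (inner : ℕ → ℕ) :
    {c : ℕ × ℕ | InSkew Lo.parts inner c}.Finite := by
  apply Set.Finite.subset (Set.finite_Iio (plength Lo) |>.prod (Set.finite_Iio (Lo.parts 0)))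
  rintro ⟨a, b⟩ ⟨-, hb⟩
  have hb' : b < Lo.parts a := hb
  have ha : a < plength Lo := by
    rw [lt_plength_iff]; omega
  exact ⟨Set.mem_Iio.mpr ha, Set.mem_Iio.mpr (lt_of_lt_of_le hb (Lo.antitone (Nat.zero_le a)))⟩

lemma value_set_finite (Lo : YPartition) (inner : ℕ → ℕ) (T : ℕ × ℕ → ℕ)
    (hT : IsSSYT Lo.parts inner T) (v : ℕ) (hv : v ≠ 0) :
    {c : ℕ × ℕ | T c = v}.Finite := by
  apply Set.Finite.subset (skew_finite_s15 Lo inner)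
  intro c hc
  simp only [Set.mem_setOf_eq] at *
  by_contra hns
  exact hv (hc ▸ hT.1 c hns)

/-- Column chain: entries strictly increase down a column contained in the skew shape. -/
lemma col_chain {outer inner : ℕ → ℕ} {T : ℕ × ℕ → ℕ} (hT : IsSSYT outer inner T)
    (n c j : ℕ) (h : ∀ j' ≤ j, InSkew outer inner (n + j', c)) :
    T (n, c) + j ≤ T (n + j, c) := by
  induction j with
  | zero => simp
  | succ k ih =>
    have h1 := ih (fun j' hj' => h j' (by omega))
    have h2 := hT.2.2.2 (n + k) c (h k (by omega)) (h (k + 1) le_rfl)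
    show T (n, c) + (k + 1) ≤ T (n + k + 1, c)
    omega

/-- In an LR tableau, each occurring value has nonzero content. -/
lemma content_pos {Lo : YPartition} {inner : ℕ → ℕ} {T : ℕ × ℕ → ℕ} {ρ : ℕ → ℕ}
    (hssyt : IsSSYT Lo.parts inner T) (hcont : HasContent T ρ)
    {c : ℕ × ℕ} (hc : InSkew Lo.parts inner c) : ρ (T c - 1) ≠ 0 := by
  have h1 : 1 ≤ T c := hssyt.2.1 c hc
  have : T c - 1 + 1 = T c := by omega
  rw [← hcont (T c - 1)]
  have hfin : {x : ℕ × ℕ | T x = T c - 1 + 1}.Finite := by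
    rw [this]; exact value_set_finite Lo inner T hssyt (T c) (by omega)
  have : c ∈ {x : ℕ × ℕ | T x = T c - 1 + 1} := by simp only [Set.mem_setOf_eq]; omega
  have := (Set.ncard_pos hfin).mpr ⟨c, this⟩
  omega

/-- Ballot condition implies each entry is at most its row index plus one. -/
lemma ballot_row {Lo : YPartition} {inner : ℕ → ℕ} {T : ℕ × ℕ → ℕ}
    (hssyt : IsSSYT Lo.parts inner T) (hb : Ballot T)
    {c : ℕ × ℕ} (hc : InSkew Lo.parts inner c) : T c ≤ c.1 + 1 := by
  obtain ⟨i, j⟩ := c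
  have key : ∀ v : ℕ, ∀ i j : ℕ, InSkew Lo.parts inner (i, j) → T (i, j) = v →
      v ≤ i + 1 := by
    intro v
    induction v using Nat.strong_induction_on with
    | _ v ih =>
      intro i j hij hv
      by_contra hgt
      push_neg at hgt
      -- v ≥ i + 2 ≥ 2
      have hv2 : 2 ≤ v := by omega
      have hbal := hb i j (v - 2)
      have hmem : (i, j) ∈ {c : ℕ × ℕ | (c.1 < i ∨ (c.1 = i ∧ j ≤ c.2)) ∧ T c = v - 2 + 2} :=
        ⟨Or.inr ⟨rfl, le_rfl⟩, by omega⟩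
      have hfin : {c : ℕ × ℕ | (c.1 < i ∨ (c.1 = i ∧ j ≤ c.2)) ∧ T c = v - 2 + 2}.Finite :=
        (value_set_finite Lo inner T hssyt (v - 2 + 2) (by omega)).subset
          (fun c hc => hc.2)
      have hpos := (Set.ncard_pos hfin).mpr ⟨(i, j), hmem⟩
      have hne : {c : ℕ × ℕ | (c.1 < i ∨ (c.1 = i ∧ j ≤ c.2)) ∧ T c = v - 2 + 1}.Nonempty := by
        rcases Set.eq_empty_or_nonempty
          {c : ℕ × ℕ | (c.1 < i ∨ (c.1 = i ∧ j ≤ c.2)) ∧ T c = v - 2 + 1} with he | hne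
        · rw [he] at hbal; simp [Set.ncard_empty] at hbal; omega
        · exact hne
      obtain ⟨⟨a, b⟩, hab⟩ := hne
      simp only [Set.mem_setOf_eq] at hab
      have habskew : InSkew Lo.parts inner (a, b) := by
        by_contra hns
        have := hssyt.1 (a, b) hns
        omega
      rcases hab.1 with hlt | ⟨heq, hle⟩
      · -- a < i : induction
        have := ih (v - 1) (by omega) a b habskew (by omega)
        omega
      · -- same row, to the right: contradicts row monotonicity
        subst heq
        have := hssyt.2.2.1 a j b hij habskew hle
        omega
  exact key (T (i, j)) i j hc rfl

lemma content_len {Lo : YPartition} {inner : ℕ → ℕ} {T : ℕ × ℕ → ℕ} {ρ : ℕ → ℕ}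
    (hssyt : IsSSYT Lo.parts inner T) (hcont : HasContent T ρ) (hb : Ballot T)
    {k : ℕ} (h : ρ k ≠ 0) : k < plength Lo := by
  rw [← hcont k] at h
  have hne : {c : ℕ × ℕ | T c = k + 1}.Nonempty := by
    rcases Set.eq_empty_or_nonempty {c : ℕ × ℕ | T c = k + 1} with he | hne
    · rw [he] at h; simp [Set.ncard_empty] at h
    · exact hne
  obtain ⟨c, hc⟩ := hne
  simp only [Set.mem_setOf_eq] at hc
  have hskew : InSkew Lo.parts inner c := by
    by_contra hns
    have := hssyt.1 c hns
    omega
  have h1 := ballot_row hssyt hb hskew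
  have h2 : c.1 < plength Lo := by
    rw [lt_plength_iff]
    have := hskew.2
    omega
  omega

lemma skew_eq_coe (Lo : YPartition) (inner : ℕ → ℕ) :
    {c : ℕ × ℕ | InSkew Lo.parts inner c} =
      ↑((Finset.range (plength Lo)).biUnion fun n =>
        {n} ×ˢ Finset.Ico (inner n) (Lo.parts n)) := by
  ext ⟨a, b⟩
  simp only [Set.mem_setOf_eq, Finset.mem_coe, Finset.mem_biUnion, Finset.mem_range,
    Finset.mem_product, Finset.mem_singleton, Finset.mem_Ico]
  constructor
  · rintro ⟨h1, h2⟩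
    have h1' : inner a ≤ b := h1
    have h2' : b < Lo.parts a := h2
    exact ⟨a, (lt_plength_iff Lo a).mpr (by omega), rfl, h1', h2'⟩
  · rintro ⟨n, _, rfl, h1, h2⟩
    exact ⟨h1, h2⟩

lemma skew_ncard (Lo : YPartition) (inner : ℕ → ℕ) :
    {c : ℕ × ℕ | InSkew Lo.parts inner c}.ncard =
      ∑ n ∈ Finset.range (plength Lo), (Lo.parts n - inner n) := by
  rw [skew_eq_coe, Set.ncard_coe_finset, Finset.card_biUnion]
  · apply Finset.sum_congr rfl
    intro n _
    rw [Finset.card_product, Finset.card_singleton, Nat.card_Ico, one_mul]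
  · intro x _ y _ hxy
    simp only [Finset.disjoint_left, Finset.mem_product, Finset.mem_singleton]
    rintro ⟨a, b⟩ ⟨h1, -⟩ ⟨h2, -⟩
    exact hxy (h1.symm.trans h2)

lemma skew_ncard_eq_sum_content (Lo : YPartition) (inner : ℕ → ℕ) (T : ℕ × ℕ → ℕ) (ρ : ℕ → ℕ)
    (hssyt : IsSSYT Lo.parts inner T) (hcont : HasContent T ρ) (hb : Ballot T)
    {K : ℕ} (hK : plength Lo ≤ K) :
    {c : ℕ × ℕ | InSkew Lo.parts inner c}.ncard = ∑ k ∈ Finset.range K, ρ k := by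
  classical
  have hfin : ∀ k : ℕ, {c : ℕ × ℕ | T c = k + 1}.Finite := fun k =>
    value_set_finite Lo inner T hssyt (k + 1) (by omega)
  have hset : (skew_finite_s15 Lo inner).toFinset =
      (Finset.range K).biUnion (fun k => (hfin k).toFinset) := by
    ext c
    simp only [Set.Finite.mem_toFinset, Set.mem_setOf_eq, Finset.mem_biUnion, Finset.mem_range]
    constructor
    · intro hc
      have h1 := hssyt.2.1 c hc
      have h2 := content_len hssyt hcont hb (content_pos hssyt hcont hc)
      exact ⟨T c - 1, by omega, by omega⟩
    · rintro ⟨k, _, hc⟩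
      by_contra hns
      have := hssyt.1 c hns
      omega
  rw [Set.ncard_eq_toFinset_card _ (skew_finite_s15 Lo inner), hset, Finset.card_biUnion]
  · refine Finset.sum_congr rfl fun k _ => ?_
    rw [← Set.ncard_eq_toFinset_card _ (hfin k), hcont k]
  · intro x _ y _ hxy
    simp only [Finset.disjoint_left, Set.Finite.mem_toFinset, Set.mem_setOf_eq]
    intro c hx hy
    exact hxy (by omega)

lemma row_seg_ncard (R x y : ℕ) :
    ({c : ℕ × ℕ | c.1 = R ∧ x ≤ c.2 ∧ c.2 < y}).ncard = y - x := by
  have h : {c : ℕ × ℕ | c.1 = R ∧ x ≤ c.2 ∧ c.2 < y} = ↑(({R} : Finset ℕ) ×ˢ Finset.Ico x y) := by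
    ext ⟨a, b⟩
    simp only [Set.mem_setOf_eq, Finset.coe_product, Set.mem_prod, Finset.coe_singleton,
      Set.mem_singleton_iff, Finset.coe_Ico, Set.mem_Ico]
  rw [h, Set.ncard_coe_finset, Finset.card_product, Finset.card_singleton, Nat.card_Ico, one_mul]

lemma multi_parts_mono {l : YPartition} {r : ℕ} {π : ℕ → ℕ} {ρ : ℕ → ℕ → ℕ}
    {L : ℕ → YPartition} {T : ℕ → ℕ × ℕ → ℕ} (h : IsLRMulti l r π ρ L T)
    {i j : ℕ} (hij : i ≤ j) (n : ℕ) : (L i).parts n ≤ (L j).parts n := by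
  induction j, hij using Nat.le_induction with
  | base => exact le_rfl
  | succ j hij ih =>
    rcases lt_or_ge j r with hj | hj
    · exact le_trans ih (h.2.2.2.1 j hj n)
    · rw [h.2.1 (j + 1) (by omega), ← h.2.1 j hj]
      exact ih

lemma plength_step {l : YPartition} {r : ℕ} {π : ℕ → ℕ} {ρ : ℕ → ℕ → ℕ}
    {L : ℕ → YPartition} {T : ℕ → ℕ × ℕ → ℕ} (h : IsLRMulti l r π ρ L T) {q : ℕ}
    (hq : ∀ i < r, ∀ k, ρ i k ≠ 0 → k < q) {i : ℕ} (hi : i < r) :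
    plength (L (i + 1)) ≤ plength (L i) + q := by
  set a := plength (L i) with ha
  by_contra hc
  push_neg at hc
  obtain ⟨hssyt, hcont, hb⟩ := h.2.2.2.2.2 i hi
  have hcells : ∀ j' ≤ q, InSkew (L (i + 1)).parts (L i).parts (a + j', 0) := by
    intro j' hj'
    constructor
    · show (L i).parts (a + j') ≤ 0
      have := parts_eq_zero_of_plength_le (L i) (show plength (L i) ≤ a + j' by omega)
      omega
    · show 0 < (L (i + 1)).parts (a + j')
      have := (lt_plength_iff (L (i + 1)) (a + j')).mp (by omega)
      omega
  have h1 := col_chain hssyt a 0 q hcells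
  have h2 := hssyt.2.1 (a, 0) (hcells 0 (Nat.zero_le q))
  have h3 := content_pos hssyt hcont (hcells q le_rfl)
  have h4 := hq i hi _ h3
  have h5 := hssyt.2.1 _ (hcells q le_rfl)
  omega

end Aux

/-- If `λ, μ, ν ⊢ m` have lengths exactly `p, q, r` with `p = qr` and `(S, T)` is a
pair of LR multitableaux of shapes `λ`, `μ`, same contents `ρ(1),…,ρ(r)` and type
`ν`, then every `ρ(i)` has length exactly `q` with all of its first `q` parts
`≥ λ_p`; moreover `μ_q ≥ r·λ_p` and `ν_r ≥ q·λ_p`. -/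
theorem lr_pair_structure (m p q r : ℕ) (lam mu nu : YPartition)
    (hlam : psize lam = m) (hmu : psize mu = m) (hnu : psize nu = m)
    (hlp : plength lam = p) (hlq : plength mu = q) (hlr : plength nu = r)
    (hpqr : p = q * r)
    (ρ : ℕ → ℕ → ℕ) (hρ : ∀ i < r, ∀ ⦃a b : ℕ⦄, a ≤ b → ρ i b ≤ ρ i a)
    (LS : ℕ → YPartition) (S : ℕ → ℕ × ℕ → ℕ)
    (LT : ℕ → YPartition) (T : ℕ → ℕ × ℕ → ℕ)
    (hS : IsLRMulti lam r nu.parts ρ LS S)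
    (hT : IsLRMulti mu r nu.parts ρ LT T) :
    (∀ i < r, Set.ncard {j | ρ i j ≠ 0} = q ∧ ∀ j < q, lam.parts (p - 1) ≤ ρ i j) ∧
    r * lam.parts (p - 1) ≤ mu.parts (q - 1) ∧
    q * lam.parts (p - 1) ≤ nu.parts (r - 1) := by
  -- Step 1: content length bound from the μ side
  have hmuq : ∀ j ≤ r, plength (LT j) ≤ q := by
    intro j hj
    rw [← hlq]
    apply plength_mono
    intro n
    have h1 := multi_parts_mono hT hj n
    rwa [hT.2.1 r le_rfl] at h1
  have hq : ∀ i < r, ∀ k, ρ i k ≠ 0 → k < q := by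
    intro i hi k hk
    obtain ⟨hssyt, hcont, hb⟩ := hT.2.2.2.2.2 i hi
    have h1 := content_len hssyt hcont hb hk
    have h2 := hmuq (i + 1) (by omega)
    omega
  -- Step 2: lengths of the λ chain
  have hSr' : LS r = lam := hS.2.1 r le_rfl
  have hplength0 : plength (LS 0) = 0 := by
    by_contra hc
    have := (lt_plength_iff (LS 0) 0).mp (by omega)
    rw [hS.1] at this
    exact this rfl
  have hupper : ∀ i ≤ r, plength (LS i) ≤ i * q := by
    intro i
    induction i with
    | zero => intro _; omega
    | succ i ih =>
      intro hi
      have h1 := plength_step hS hq (show i < r by omega)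
      have h2 := ih (by omega)
      have h3 : (i + 1) * q = i * q + q := by ring
      omega
  have hgap : ∀ d i, i + d ≤ r → plength (LS (i + d)) ≤ plength (LS i) + d * q := by
    intro d
    induction d with
    | zero => intro i _; simp
    | succ d ih =>
      intro i hi
      have h1 := ih (i + 1) (by omega)
      have h2 := plength_step hS hq (show i < r by omega)
      have he : i + (d + 1) = i + 1 + d := by omega
      rw [he, Nat.succ_mul]
      omega
  have hlen : ∀ i ≤ r, plength (LS i) = i * q := by
    intro i hi
    have h1 := hupper i hi
    have h2 := hgap (r - i) i (by omega)
    have h3 : i + (r - i) = r := by omega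
    rw [h3, hSr', hlp] at h2
    have h4 : i * q + (r - i) * q = q * r := by
      rw [← Nat.add_mul, h3, Nat.mul_comm]
    omega
  -- Step 3: column depth in the λ chain
  have hdepth : ∀ d ≤ r, ∀ c < lam.parts (p - 1), ∀ n < (r - d) * q, c < (LS (r - d)).parts n := by
    intro d
    induction d with
    | zero =>
      intro _ c hc n hn
      rw [Nat.sub_zero] at hn ⊢
      rw [hSr']
      have h0 : r * q = q * r := Nat.mul_comm r q
      have h1 : n ≤ p - 1 := by omega
      have h2 := lam.antitone h1
      omega
    | succ d ih =>
      intro hd c hc n hn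
      have hir : r - (d + 1) < r := by omega
      have hi1 : r - d = r - (d + 1) + 1 := by omega
      have ihc := ih (by omega) c hc
      rw [hi1] at ihc
      by_contra hle
      push_neg at hle
      obtain ⟨hssyt, hcont, hb⟩ := hS.2.2.2.2.2 (r - (d + 1)) hir
      have hcells : ∀ j' ≤ q,
          InSkew (LS (r - (d + 1) + 1)).parts (LS (r - (d + 1))).parts (n + j', c) := by
        intro j' hj'
        refine ⟨?_, ?_⟩
        · show (LS (r - (d + 1))).parts (n + j') ≤ c
          exact le_trans ((LS (r - (d + 1))).antitone (by omega)) hle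
        · show c < (LS (r - (d + 1) + 1)).parts (n + j')
          apply ihc
          have h5 : (r - (d + 1) + 1) * q = (r - (d + 1)) * q + q := Nat.succ_mul _ q
          omega
      have h1 := col_chain hssyt n c q hcells
      have h2 := hssyt.2.1 (n, c) (hcells 0 (Nat.zero_le q))
      have h3 := content_pos hssyt hcont (hcells q le_rfl)
      have h4 := hq _ hir _ h3
      have h5 := hssyt.2.1 _ (hcells q le_rfl)
      omega
  -- Step 4: λ-side lower bound on the last part of each content
  have hD5 : ∀ i < r, lam.parts (p - 1) ≤ ρ i (q - 1) := by
    intro i hi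
    rcases Nat.eq_zero_or_pos q with hq0 | hq1
    · have hp0 : p = 0 := by rw [hpqr, hq0, Nat.zero_mul]
      have h0 := parts_eq_zero_of_plength_le lam (show plength lam ≤ p - 1 by omega)
      omega
    obtain ⟨hssyt, hcont, hb⟩ := hS.2.2.2.2.2 i hi
    have hiq : plength (LS i) = i * q := hlen i (by omega)
    have hdep := hdepth (r - (i + 1)) (by omega)
    have hri : r - (r - (i + 1)) = i + 1 := by omega
    rw [hri] at hdep
    have hcells : ∀ c < lam.parts (p - 1), ∀ j' ≤ q - 1,
        InSkew (LS (i + 1)).parts (LS i).parts (i * q + j', c) := by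
      intro c hc j' hj'
      constructor
      · show (LS i).parts (i * q + j') ≤ c
        rw [parts_eq_zero_of_plength_le (LS i) (by omega)]
        exact Nat.zero_le c
      · show c < (LS (i + 1)).parts (i * q + j')
        apply hdep c hc
        have h6 : (i + 1) * q = i * q + q := by ring
        omega
    have hval : ∀ c < lam.parts (p - 1), S i (i * q + (q - 1), c) = q := by
      intro c hc
      have h1 := col_chain hssyt (i * q) c (q - 1) (fun j' hj' => hcells c hc j' hj')
      have h2 := hssyt.2.1 (i * q, c) (hcells c hc 0 (Nat.zero_le _))
      have h3 := content_pos hssyt hcont (hcells c hc (q - 1) le_rfl)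
      have h4 := hq i hi _ h3
      have h5 := hssyt.2.1 _ (hcells c hc (q - 1) le_rfl)
      omega
    have hsub : {c : ℕ × ℕ | c.1 = i * q + (q - 1) ∧ 0 ≤ c.2 ∧ c.2 < lam.parts (p - 1)}
        ⊆ {c : ℕ × ℕ | S i c = (q - 1) + 1} := by
      rintro ⟨a, b⟩ ⟨ha, -, hb⟩
      have hv := hval b hb
      simp only [Set.mem_setOf_eq] at ha ⊢
      rw [ha]
      omega
    have hcard := Set.ncard_le_ncard hsub
      (value_set_finite (LS (i + 1)) (LS i).parts (S i) hssyt ((q - 1) + 1) (by omega))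
    rw [row_seg_ncard, hcont (q - 1)] at hcard
    omega
  -- Step 5: first conclusion
  have hconc1 : ∀ i < r,
      Set.ncard {j | ρ i j ≠ 0} = q ∧ ∀ j < q, lam.parts (p - 1) ≤ ρ i j := by
    intro i hi
    have hmono := hρ i hi
    have hlow : ∀ j < q, lam.parts (p - 1) ≤ ρ i j := by
      intro j hj
      exact le_trans (hD5 i hi) (hmono (show j ≤ q - 1 by omega))
    refine ⟨?_, hlow⟩
    rcases Nat.eq_zero_or_pos q with hq0 | hq1
    · have hempty : {j | ρ i j ≠ 0} = ∅ := by
        ext j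
        simp only [Set.mem_setOf_eq, Set.mem_empty_iff_false, iff_false, not_not]
        by_contra hc
        have := hq i hi j hc
        omega
      rw [hempty, Set.ncard_empty, hq0]
    · have hpos : lam.parts (p - 1) ≠ 0 := by
        rw [← lt_plength_iff, hlp]
        have h1 : 1 ≤ q * r := Nat.mul_pos hq1 (by omega)
        omega
      have hset : {j | ρ i j ≠ 0} = ↑(Finset.range q) := by
        ext j
        simp only [Set.mem_setOf_eq, Finset.coe_range, Set.mem_Iio]
        constructor
        · exact hq i hi j
        · intro hj
          have := hlow j hj
          omega
      rw [hset, Set.ncard_coe_finset, Finset.card_range]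
  -- Step 6: second conclusion via the μ chain
  have hmu_step : ∀ i < r,
      (LT i).parts (q - 1) + ρ i (q - 1) ≤ (LT (i + 1)).parts (q - 1) := by
    intro i hi
    rcases Nat.eq_zero_or_pos q with hq0 | hq1
    · have h0 : ρ i (q - 1) = 0 := by
        by_contra hc
        have := hq i hi _ hc
        omega
      have := hT.2.2.2.1 i hi (q - 1)
      omega
    obtain ⟨hssyt, hcont, hb⟩ := hT.2.2.2.2.2 i hi
    have hsub : {c : ℕ × ℕ | T i c = (q - 1) + 1} ⊆
        {c : ℕ × ℕ | c.1 = q - 1 ∧ (LT i).parts (q - 1) ≤ c.2 ∧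
          c.2 < (LT (i + 1)).parts (q - 1)} := by
      intro c hc
      simp only [Set.mem_setOf_eq] at hc ⊢
      have hskew : InSkew (LT (i + 1)).parts (LT i).parts c := by
        by_contra hns
        have := hssyt.1 c hns
        omega
      have hrow := ballot_row hssyt hb hskew
      have hlt : c.1 < plength (LT (i + 1)) := by
        rw [lt_plength_iff]
        have := hskew.2
        omega
      have hq' := hmuq (i + 1) (by omega)
      have hc1 : c.1 = q - 1 := by omega
      refine ⟨hc1, ?_, ?_⟩
      · have := hskew.1; rw [← hc1]; exact this
      · have := hskew.2; rw [← hc1]; exact this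
    have hfinseg : {c : ℕ × ℕ | c.1 = q - 1 ∧ (LT i).parts (q - 1) ≤ c.2 ∧
        c.2 < (LT (i + 1)).parts (q - 1)}.Finite := by
      apply Set.Finite.subset
        ((Set.finite_singleton (q - 1)).prod (Set.finite_Iio ((LT (i + 1)).parts (q - 1))))
      rintro ⟨a, b⟩ ⟨ha, -, hb⟩
      exact ⟨ha, hb⟩
    have hcard := Set.ncard_le_ncard hsub hfinseg
    rw [row_seg_ncard, hcont (q - 1)] at hcard
    have hmono := hT.2.2.2.1 i hi (q - 1)
    omega
  have hmu_acc : ∀ n ≤ r, n * lam.parts (p - 1) ≤ (LT n).parts (q - 1) := by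
    intro n
    induction n with
    | zero => intro _; simp
    | succ n ih =>
      intro hn
      have h1 := ih (by omega)
      have h2 := hmu_step n (by omega)
      have h3 := hD5 n (by omega)
      have h4 : (n + 1) * lam.parts (p - 1) = n * lam.parts (p - 1) + lam.parts (p - 1) := by ring
      omega
  have hconc2 : r * lam.parts (p - 1) ≤ mu.parts (q - 1) := by
    have h1 := hmu_acc r le_rfl
    rwa [hT.2.1 r le_rfl] at h1
  -- Step 7: third conclusion
  have hconc3 : q * lam.parts (p - 1) ≤ nu.parts (r - 1) := by
    rcases Nat.eq_zero_or_pos r with hr0 | hr1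
    · have hp0 : p = 0 := by rw [hpqr, hr0, Nat.mul_zero]
      have h0 := parts_eq_zero_of_plength_le lam (show plength lam ≤ p - 1 by omega)
      rw [h0, Nat.mul_zero]
      exact Nat.zero_le _
    · have hir : r - 1 < r := by omega
      have hi1 : r - 1 + 1 = r := by omega
      obtain ⟨hssyt, hcont, hb⟩ := hS.2.2.2.2.2 (r - 1) hir
      have hsize := hS.2.2.2.2.1 (r - 1) hir
      have hKp : plength (LS (r - 1 + 1)) ≤ p := by rw [hi1, hSr', hlp]
      have e1 := skew_ncard_eq_sum_content (LS (r - 1 + 1)) (LS (r - 1)).parts (S (r - 1))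
        (ρ (r - 1)) hssyt hcont hb hKp
      have e2 := skew_ncard (LS (r - 1 + 1)) (LS (r - 1)).parts
      rw [hi1, hSr', hlp] at e2
      rw [hi1, hSr'] at e1
      have hple : ∀ n ∈ Finset.range p, (LS (r - 1)).parts n ≤ lam.parts n := by
        intro n _
        have h1 := multi_parts_mono hS (show r - 1 ≤ r by omega) n
        rwa [hSr'] at h1
      rw [Finset.sum_tsub_distrib _ hple] at e2
      have ep1 : psize lam = ∑ n ∈ Finset.range p, lam.parts n := psize_eq_sum lam (by omega)
      have hiqp : (r - 1) * q ≤ p := by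
        have h1 : (r - 1) * q ≤ r * q := Nat.mul_le_mul_right q (by omega)
        have h2 : r * q = q * r := Nat.mul_comm r q
        omega
      have ep2 : psize (LS (r - 1)) = ∑ n ∈ Finset.range p, (LS (r - 1)).parts n :=
        psize_eq_sum (LS (r - 1)) (by rw [hlen (r - 1) (by omega)]; exact hiqp)
      rw [hi1, hSr'] at hsize
      have hsum_le : ∑ n ∈ Finset.range p, (LS (r - 1)).parts n ≤
          ∑ n ∈ Finset.range p, lam.parts n := Finset.sum_le_sum hple
      have eq1 : ∑ k ∈ Finset.range p, ρ (r - 1) k = nu.parts (r - 1) := by omega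
      have hqp : q ≤ p := by
        have h1 : q * 1 ≤ q * r := Nat.mul_le_mul_left q hr1
        omega
      have hlow := (hconc1 (r - 1) hir).2
      have hsum1 : q * lam.parts (p - 1) ≤ ∑ k ∈ Finset.range q, ρ (r - 1) k := by
        calc q * lam.parts (p - 1) = ∑ _k ∈ Finset.range q, lam.parts (p - 1) := by
              rw [Finset.sum_const, Finset.card_range, smul_eq_mul]
          _ ≤ ∑ k ∈ Finset.range q, ρ (r - 1) k :=
              Finset.sum_le_sum (fun k hk => hlow k (Finset.mem_range.mp hk))
      have hsum2 : ∑ k ∈ Finset.range q, ρ (r - 1) k ≤ ∑ k ∈ Finset.range p, ρ (r - 1) k :=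
        Finset.sum_le_sum_of_subset (Finset.range_subset_range.mpr hqp)
      omega
  exact ⟨hconc1, hconc2, hconc3⟩
end
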